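/- Let G be a t.d.l.c. group and K a compact subgroup of G. Then K is equal to the intersection of all compact open subgroups U of G with K ≤ U. -/

import Mathlib

open Set Filter
open scoped Pointwise Topology

section Aux

variable {G : Type*} [Group G] [TopologicalSpace G] [IsTopologicalGroup G]
    [T2Space G] [TotallyDisconnectedSpace G] [LocallyCompactSpace G]

private lemma aux_exist_mul_closure_nhd {W : Set G} (Wcomp : IsCompact W)
    (WClopen : IsClopen W) : ∃ T ∈ 𝓝 (1 : G), W * T ⊆ W := by
  apply Wcomp.induction_on (p := fun S ↦ ∃ T ∈ 𝓝 (1 : G), S * T ⊆ W)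
    ⟨Set.univ, by simp only [univ_mem, empty_mul, empty_subset, and_self]⟩
    (fun _ _ huv ⟨T, hT, mem⟩ ↦ ⟨T, hT, (mul_subset_mul_right huv).trans mem⟩)
    fun U V ⟨T₁, hT₁, mem1⟩ ⟨T₂, hT₂, mem2⟩ ↦ ⟨T₁ ∩ T₂, inter_mem hT₁ hT₂, by
      rw [union_mul]
      exact union_subset (mul_subset_mul_left inter_subset_left |>.trans mem1)
        (mul_subset_mul_left inter_subset_right |>.trans mem2)⟩
  intro x memW
  have : (x, 1) ∈ (fun p : G × G ↦ p.1 * p.2) ⁻¹' W := by simp [memW]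
  rcases isOpen_prod_iff.mp (continuous_mul.isOpen_preimage W <| WClopen.2) x 1 this with
    ⟨U, V, Uopen, Vopen, xmemU, onememV, prodsub⟩
  have h6 : U * V ⊆ W := mul_subset_iff.mpr (fun _ hx _ hy ↦ prodsub (mk_mem_prod hx hy))
  exact ⟨U ∩ W, ⟨U, Uopen.mem_nhds xmemU, W, fun _ a ↦ a, rfl⟩,
    V, Vopen.mem_nhds onememV, fun _ a ↦ h6 ((mul_subset_mul_right inter_subset_left) a)⟩

/-- van Dantzig's theorem: compact open subgroups form a neighbourhood basis of `1`. -/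
private lemma aux_vanDantzig {O : Set G} (hO : O ∈ 𝓝 (1 : G)) :
    ∃ V : Subgroup G, IsCompact (V : Set G) ∧ IsOpen (V : Set G) ∧ (V : Set G) ⊆ O := by
  obtain ⟨s, hs_comp, hs_nhds⟩ := exists_compact_mem_nhds (1 : G)
  have h1 : interior s ∩ O ∈ 𝓝 (1 : G) :=
    inter_mem (interior_mem_nhds.mpr hs_nhds) hO
  obtain ⟨W, hWclopen, h1W, hWsub⟩ :=
    (loc_compact_Haus_tot_disc_of_zero_dim (H := G)).mem_nhds_iff.mp h1
  have hWclopen : IsClopen W := hWclopen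
  have Wcomp : IsCompact W := hs_comp.of_isClosed_subset hWclopen.1
    (fun x hx => interior_subset (hWsub hx).1)
  obtain ⟨T, Tnhds, mulclose⟩ := aux_exist_mul_closure_nhd Wcomp hWclopen
  rcases mem_nhds_iff.mp Tnhds with ⟨U₀, UsubT, Uopen, onememU⟩
  set V : Set G := U₀ ∩ U₀⁻¹ with hVdef
  have Vopen : IsOpen V := Uopen.inter Uopen.inv
  have Vone : (1 : G) ∈ V := ⟨onememU, by simpa using onememU⟩
  have Vinv : V⁻¹ = V := by simp [hVdef, inter_comm]
  have Vmul : W * V ⊆ W := fun a ha ↦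
    mulclose (mul_subset_mul_left (fun x hx => UsubT hx.1) ha)
  have einW : (1 : G) ∈ W := h1W
  let S : Subgroup G := {
    carrier := ⋃ n, V ^ (n + 1)
    mul_mem' := fun ha hb ↦ by
      rcases mem_iUnion.mp ha with ⟨k, hk⟩
      rcases mem_iUnion.mp hb with ⟨l, hl⟩
      apply mem_iUnion.mpr
      use k + 1 + l
      rw [add_assoc, pow_add]
      exact Set.mul_mem_mul hk hl
    one_mem' := by
      apply mem_iUnion.mpr
      use 0
      simpa using Vone
    inv_mem' := fun ha ↦ by
      rcases mem_iUnion.mp ha with ⟨k, hk⟩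
      apply mem_iUnion.mpr
      use k
      rw [← Vinv]
      simpa only [inv_pow, Set.mem_inv, inv_inv] using hk }
  have Sopen : IsOpen (⋃ n, V ^ (n + 1)) := by
    refine isOpen_iUnion (fun n ↦ ?_)
    rw [pow_succ]
    exact Vopen.mul_left
  have mulVpow (n : ℕ) : W * V ^ (n + 1) ⊆ W := by
    induction' n with n ih
    · simpa using Vmul
    · rw [pow_succ, ← mul_assoc]
      exact (Set.mul_subset_mul_right ih).trans Vmul
  have hpow (n : ℕ) : V ^ (n + 1) ⊆ W * V ^ (n + 1) := by
    intro x xin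
    rw [Set.mem_mul]
    exact ⟨1, einW, x, xin, one_mul x⟩
  have SsubW : (S : Set G) ⊆ W := iUnion_subset fun i _ a ↦ mulVpow i (hpow i a)
  refine ⟨S, ?_, Sopen, fun x hx => (hWsub (SsubW hx)).2⟩
  exact Wcomp.of_isClosed_subset (S.isClosed_of_isOpen Sopen) SsubW

/-- Given a compact subgroup `K` and a compact open subgroup `V`, there is a compact open
subgroup `U` with `K ≤ U` and `U ⊆ K * V`. -/
private lemma aux_exists_compact_open_above (K : Subgroup G) (hK : IsCompact (K : Set G))
    (V : Subgroup G) (hVc : IsCompact (V : Set G)) (hVo : IsOpen (V : Set G)) :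
    ∃ U : Subgroup G, IsCompact (U : Set G) ∧ IsOpen (U : Set G) ∧ K ≤ U ∧
      (U : Set G) ⊆ (K : Set G) * (V : Set G) := by
  classical
  -- the intersection of the `K`-conjugates of `V`
  let W : Subgroup G := {
    carrier := {x | ∀ k ∈ K, k * x * k⁻¹ ∈ V}
    one_mem' := fun k _ => by simpa using one_mem V
    mul_mem' := fun {a b} ha hb k hk => by
      have h : k * (a * b) * k⁻¹ = (k * a * k⁻¹) * (k * b * k⁻¹) := by group
      rw [h]; exact mul_mem (ha k hk) (hb k hk)
    inv_mem' := fun {a} ha k hk => by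
      have h : k * a⁻¹ * k⁻¹ = (k * a * k⁻¹)⁻¹ := by group
      rw [h]; exact inv_mem (ha k hk) }
  have WleV : (W : Set G) ⊆ (V : Set G) := fun x hx => by simpa using hx 1 (one_mem K)
  -- `W` is open: tube-lemma argument over the compact set `K`
  have key : ∀ k ∈ (K : Set G), ∃ A : Set G, ∃ B : Set G, IsOpen A ∧ IsOpen B ∧ k ∈ A ∧
      (1 : G) ∈ B ∧ ∀ a ∈ A, ∀ b ∈ B, a * b * a⁻¹ ∈ V := by
    intro k _
    have cont : Continuous fun p : G × G => p.1 * p.2 * p.1⁻¹ := by fun_prop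
    have hpre : IsOpen ((fun p : G × G => p.1 * p.2 * p.1⁻¹) ⁻¹' (V : Set G)) :=
      hVo.preimage cont
    have hmem : (k, (1 : G)) ∈ (fun p : G × G => p.1 * p.2 * p.1⁻¹) ⁻¹' (V : Set G) := by
      simp [one_mem V]
    rcases isOpen_prod_iff.mp hpre k 1 hmem with ⟨A, B, hA, hB, hkA, h1B, hsub⟩
    exact ⟨A, B, hA, hB, hkA, h1B, fun a ha b hb => hsub (mk_mem_prod ha hb)⟩
  choose! A B hAopen hBopen hkA h1B hABV using key
  obtain ⟨t, hts, hcover⟩ := hK.elim_nhds_subcover A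
    (fun k hk => (hAopen k hk).mem_nhds (hkA k hk))
  have Wopen : IsOpen (W : Set G) := by
    apply Subgroup.isOpen_of_mem_nhds
    rw [mem_nhds_iff]
    refine ⟨⋂ k ∈ t, B k, ?_, ?_, ?_⟩
    · intro x hx k hk
      rcases mem_iUnion₂.mp (hcover hk) with ⟨k₀, hk₀t, hkA₀⟩
      exact hABV k₀ (hts k₀ hk₀t) k hkA₀ x (mem_iInter₂.mp hx k₀ hk₀t)
    · exact isOpen_biInter_finset fun k hk => hBopen k (hts k hk)
    · exact mem_iInter₂.mpr fun k hk => h1B k (hts k hk)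
  have Wcomp : IsCompact (W : Set G) :=
    hVc.of_isClosed_subset (W.isClosed_of_isOpen Wopen) WleV
  -- `K` normalizes `W`
  have normW : ∀ k ∈ K, ∀ w ∈ W, k * w * k⁻¹ ∈ W := by
    intro k hk w hw k' hk'
    have h : k' * (k * w * k⁻¹) * k'⁻¹ = (k' * k) * w * (k' * k)⁻¹ := by group
    rw [h]; exact hw (k' * k) (mul_mem hk' hk)
  -- the subgroup with carrier `K * W`
  let U : Subgroup G := {
    carrier := (K : Set G) * (W : Set G)
    one_mem' := ⟨1, one_mem K, 1, one_mem W, mul_one 1⟩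
    mul_mem' := fun {a b} ha hb => by
      rcases ha with ⟨k₁, hk₁, w₁, hw₁, rfl⟩
      rcases hb with ⟨k₂, hk₂, w₂, hw₂, rfl⟩
      refine ⟨k₁ * k₂, mul_mem hk₁ hk₂, (k₂⁻¹ * w₁ * k₂) * w₂,
        mul_mem (by simpa using normW k₂⁻¹ (inv_mem hk₂) w₁ hw₁) hw₂, by group⟩
    inv_mem' := fun {a} ha => by
      rcases ha with ⟨k, hk, w, hw, rfl⟩
      exact ⟨k⁻¹, inv_mem hk, k * w⁻¹ * k⁻¹, normW k hk w⁻¹ (inv_mem hw), by group⟩ }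
  have WleU : W ≤ U := fun w hw => ⟨1, one_mem K, w, hw, one_mul w⟩
  refine ⟨U, ?_, Subgroup.isOpen_mono WleU Wopen, fun k hk => ⟨k, hk, 1, one_mem W, mul_one k⟩,
    fun x hx => Set.mul_subset_mul_left WleV hx⟩
  exact hK.mul Wcomp

end Aux

/-- Let `G` be a t.d.l.c. group and `K` a compact subgroup of `G`. Then `K` is the
intersection of all compact open subgroups `U` of `G` with `K ≤ U`. -/
theorem compact_subgroup_eq_sInf_compact_open_subgroups
    {G : Type*} [Group G] [TopologicalSpace G] [IsTopologicalGroup G]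
    [T2Space G] [TotallyDisconnectedSpace G] [LocallyCompactSpace G]
    (K : Subgroup G) (hK : IsCompact (K : Set G)) :
    K = sInf {U : Subgroup G | IsCompact (U : Set G) ∧ IsOpen (U : Set G) ∧ K ≤ U} := by
  refine le_antisymm (le_sInf fun U hU => hU.2.2) ?_
  intro g hg
  by_contra hgK
  -- the compact set `K⁻¹ * g`, which does not contain `1`
  set D : Set G := (fun k => k⁻¹ * g) '' (K : Set G) with hDdef
  have Dcomp : IsCompact D := hK.image (by fun_prop)
  have hD1 : (1 : G) ∉ D := by
    rintro ⟨k, hk, hk1⟩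
    have h2 : k⁻¹ * g = 1 := by simpa using hk1
    have : g = k := by
      rw [inv_mul_eq_one] at h2; exact h2.symm
    exact hgK (this ▸ hk)
  have hDc : Dᶜ ∈ 𝓝 (1 : G) := Dcomp.isClosed.isOpen_compl.mem_nhds hD1
  obtain ⟨V, hVc, hVo, hVsub⟩ := aux_vanDantzig hDc
  obtain ⟨U, hUc, hUo, hKU, hUKV⟩ := aux_exists_compact_open_above K hK V hVc hVo
  have hgU : g ∈ U := by
    have := Subgroup.mem_sInf.mp hg U ⟨hUc, hUo, hKU⟩
    exact this
  rcases hUKV hgU with ⟨k, hk, v, hv, hkv⟩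
  have : v ∈ D := ⟨k, hk, by rw [← hkv]; group⟩
  exact hVsub hv this
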